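/- Let V be a compact smooth manifold, A = C^∞(V,ℂ), f ∈ A, and 𝔮 a prime ideal of A with f ∉ 𝔮. Then the point m(𝔮) ∈ V (the unique point where all elements of 𝔮 vanish) lies in the support of f. -/

import Mathlib

open scoped Manifold

/-- `ℂ` is a smooth ring as a manifold over `ℝ`. -/
instance : ContMDiffRing 𝓘(ℝ, ℂ) (⊤ : ℕ∞) ℂ :=
  { instNormedSpaceLieAddGroup with
    contMDiff_mul := by
      rw [contMDiff_iff]
      refine ⟨continuous_mul, fun x y => ?_⟩
      simp only [mfld_simps, chartAt_self_eq]
      rw [contDiffOn_univ]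
      exact contDiff_mul }

/-- Evaluation at a point, as a ring homomorphism on the algebra `C^∞(V, ℂ)`
of smooth complex valued functions. -/
noncomputable def smoothEvalRingHom {E H : Type*} [NormedAddCommGroup E] [NormedSpace ℝ E]
    [TopologicalSpace H] (I : ModelWithCorners ℝ E H) (V : Type*) [TopologicalSpace V]
    [ChartedSpace H V] (x : V) : ContMDiffMap I 𝓘(ℝ, ℂ) V ℂ (⊤ : ℕ∞) →+* ℂ where
  toFun f := f x
  map_one' := rfl
  map_mul' _ _ := rfl
  map_zero' := rfl
  map_add' _ _ := rfl

/-- Let `V` be a compact smooth manifold, `A = C^∞(V, ℂ)`, `f ∈ A`, and `𝔮` a prime ideal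
of `A` with `f ∉ 𝔮`.  Then the point `m(𝔮) ∈ V` (the unique point at which all elements of
`𝔮` vanish) lies in the support of `f`, i.e. in the closure of `{x : f(x) ≠ 0}`. -/
theorem point_of_prime_mem_support
    {E H : Type*} [NormedAddCommGroup E] [NormedSpace ℝ E] [FiniteDimensional ℝ E]
    [TopologicalSpace H] (I : ModelWithCorners ℝ E H)
    (V : Type*) [TopologicalSpace V] [ChartedSpace H V] [IsManifold I (⊤ : ℕ∞) V]
    [CompactSpace V] [T2Space V]
    (f : ContMDiffMap I 𝓘(ℝ, ℂ) V ℂ (⊤ : ℕ∞))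
    (𝔮 : Ideal (ContMDiffMap I 𝓘(ℝ, ℂ) V ℂ (⊤ : ℕ∞))) (h𝔮 : 𝔮.IsPrime) (hf : f ∉ 𝔮)
    (x : V) (hx : 𝔮 ≤ RingHom.ker (smoothEvalRingHom I V x)) :
    x ∈ closure {y : V | f y ≠ 0} := by
  by_contra hxc
  obtain ⟨g, hg0, hg1, -⟩ := exists_contMDiffMap_zero_one_of_isClosed I
    (isClosed_closure (s := {y : V | f y ≠ 0})) (isClosed_singleton (x := x))
    (Set.disjoint_right.2 (by simpa using hxc)) (n := (⊤ : ℕ∞))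
  set gc : ContMDiffMap I 𝓘(ℝ, ℂ) V ℂ (⊤ : ℕ∞) :=
    ⟨fun y => (g y : ℂ), Complex.ofRealCLM.contDiff.contMDiff.comp g.contMDiff⟩ with hgc
  have hmul : gc * f = 0 := by
    ext y
    by_cases hy : f y = 0
    · simp [hy]
    · have : g y = 0 := hg0 (subset_closure hy)
      change (g y : ℂ) * f y = 0
      simp [hgc, this]
  have hmem : gc * f ∈ 𝔮 := hmul ▸ 𝔮.zero_mem
  rcases h𝔮.mem_or_mem hmem with hg | hfm
  · have h0 : gc x = 0 := hx hg
    have h1 : g x = 1 := hg1 rfl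
    have : (g x : ℂ) = 0 := h0
    rw [h1] at this
    simp at this
  · exact hf hfm
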